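/- Let γ ∈ (0,1), μ > 0, T > 0, and r : [0,T] → ℝ continuous with ‖r‖_{[0,T]} = max |r|. Define v₃(t) = ∫₀^t M(t−τ) r(τ) dτ with M(θ) = θ^{−γ} ∫₀^θ (1 − e^{−μξ^γ})/ξ^{1−γ} dξ. Then v₃ is Lipschitz continuous on [0,T] with Lipschitz constant L = (γ+2) μ ‖r‖_{[0,T]} T^γ / (2(γ+1)γ). -/

import Mathlib

open MeasureTheory Set

/-- The auxiliary function `M(θ) = θ^(−γ) ∫₀^θ (1 − e^(−μξ^γ))/ξ^(1−γ) dξ`. -/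
noncomputable def Mfun (γ μ θ : ℝ) : ℝ :=
  θ ^ (-γ) * ∫ ξ in (0:ℝ)..θ, (1 - Real.exp (-(μ * ξ ^ γ))) / ξ ^ (1 - γ)

/-- Auxiliary: `G(x) = ∫₀¹ (1 − e^(−x u^γ)) u^(γ−1) du`, so that `M(θ) = G (μ θ^γ)`. -/
noncomputable def Gfun (γ x : ℝ) : ℝ :=
  ∫ u in (0:ℝ)..1, (1 - Real.exp (-(x * u ^ γ))) * u ^ (γ - 1)

lemma exp_neg_sub_exp_neg {a b : ℝ} (ha : 0 ≤ a) (hab : a ≤ b) :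
    Real.exp (-a) - Real.exp (-b) ≤ b - a := by
  have h1 : Real.exp (-a) ≤ 1 := by
    calc Real.exp (-a) ≤ Real.exp 0 := Real.exp_le_exp.mpr (by linarith)
    _ = 1 := Real.exp_zero
  have h2 : a - b + 1 ≤ Real.exp (a - b) := Real.add_one_le_exp _
  have h3 : Real.exp (-b) = Real.exp (-a) * Real.exp (a - b) := by
    rw [← Real.exp_add]; ring_nf
  have h4 : Real.exp (a - b) ≤ 1 := by
    calc Real.exp (a - b) ≤ Real.exp 0 := Real.exp_le_exp.mpr (by linarith)
    _ = 1 := Real.exp_zero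
  have h5 := Real.exp_pos (-a)
  nlinarith

lemma integrable_G_integrand {γ x : ℝ} (hγ0 : 0 < γ) (hx : 0 ≤ x) :
    IntervalIntegrable (fun u : ℝ => (1 - Real.exp (-(x * u ^ γ))) * u ^ (γ - 1))
      volume 0 1 := by
  rw [intervalIntegrable_iff_integrableOn_Ioc_of_le zero_le_one]
  have hg : IntegrableOn (fun u : ℝ => u ^ (γ - 1)) (Ioc (0:ℝ) 1) := by
    have := intervalIntegral.intervalIntegrable_rpow' (a := (0:ℝ)) (b := 1)
      (show (-1:ℝ) < γ - 1 by linarith)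
    rwa [intervalIntegrable_iff_integrableOn_Ioc_of_le zero_le_one] at this
  refine hg.mono' ?_ ?_
  · apply ContinuousOn.aestronglyMeasurable ?_ measurableSet_Ioc
    intro u hu
    have hu0 : u ≠ 0 := ne_of_gt hu.1
    have c1 : ContinuousAt (fun u : ℝ => u ^ γ) u :=
      Real.continuousAt_rpow_const u γ (Or.inl hu0)
    have c2 : ContinuousAt (fun u : ℝ => u ^ (γ - 1)) u :=
      Real.continuousAt_rpow_const u (γ - 1) (Or.inl hu0)
    have c3 : ContinuousAt (fun u : ℝ => Real.exp (-(x * u ^ γ))) u :=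
      Real.continuous_exp.continuousAt.comp ((c1.const_mul x).neg)
    exact ((continuousAt_const.sub c3).mul c2).continuousWithinAt
  · filter_upwards [ae_restrict_mem measurableSet_Ioc] with u hu
    have hu0 : 0 < u := hu.1
    have e1 : Real.exp (-(x * u ^ γ)) ≤ 1 := by
      calc Real.exp (-(x * u ^ γ)) ≤ Real.exp 0 := by
            apply Real.exp_le_exp.mpr
            have : 0 ≤ x * u ^ γ := mul_nonneg hx (Real.rpow_nonneg hu0.le _)
            linarith
      _ = 1 := Real.exp_zero
    have e2 : 0 < Real.exp (-(x * u ^ γ)) := Real.exp_pos _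
    have e3 : 0 ≤ u ^ (γ - 1) := Real.rpow_nonneg hu0.le _
    rw [Real.norm_eq_abs, abs_mul, abs_of_nonneg (by linarith : (0:ℝ) ≤ 1 - Real.exp (-(x * u ^ γ))),
      abs_of_nonneg e3]
    nlinarith

lemma Gfun_diff {γ x y : ℝ} (hγ0 : 0 < γ) (hx : 0 ≤ x) (hxy : x ≤ y) :
    0 ≤ Gfun γ y - Gfun γ x ∧ Gfun γ y - Gfun γ x ≤ (y - x) / (2 * γ) := by
  have hy : 0 ≤ y := hx.trans hxy
  have hix := integrable_G_integrand hγ0 hx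
  have hiy := integrable_G_integrand hγ0 hy
  have hfun : (fun u : ℝ => (Real.exp (-(x * u ^ γ)) - Real.exp (-(y * u ^ γ))) * u ^ (γ - 1))
      = fun u : ℝ => (1 - Real.exp (-(y * u ^ γ))) * u ^ (γ - 1)
        - (1 - Real.exp (-(x * u ^ γ))) * u ^ (γ - 1) := by
    ext u; ring
  have hsub : Gfun γ y - Gfun γ x
      = ∫ u in (0:ℝ)..1, (Real.exp (-(x * u ^ γ)) - Real.exp (-(y * u ^ γ))) * u ^ (γ - 1) := by
    rw [Gfun, Gfun, hfun, intervalIntegral.integral_sub hiy hix]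
  constructor
  · rw [hsub]
    apply intervalIntegral.integral_nonneg zero_le_one
    intro u hu
    have h2 : (0:ℝ) ≤ u ^ (γ - 1) := Real.rpow_nonneg hu.1 _
    have h1 : Real.exp (-(y * u ^ γ)) ≤ Real.exp (-(x * u ^ γ)) := by
      apply Real.exp_le_exp.mpr
      have := Real.rpow_nonneg hu.1 γ
      nlinarith
    nlinarith
  · rw [hsub]
    have hint1 : IntervalIntegrable
        (fun u : ℝ => (Real.exp (-(x * u ^ γ)) - Real.exp (-(y * u ^ γ))) * u ^ (γ - 1))
        volume 0 1 := by
      rw [hfun]; exact hiy.sub hix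
    have hint2 : IntervalIntegrable (fun u : ℝ => (y - x) * u ^ (2 * γ - 1)) volume 0 1 :=
      (intervalIntegral.intervalIntegrable_rpow' (by linarith)).const_mul _
    have hmono := intervalIntegral.integral_mono_on zero_le_one hint1 hint2 ?_
    · refine hmono.trans (le_of_eq ?_)
      rw [intervalIntegral.integral_const_mul,
        integral_rpow (Or.inl (by linarith : (-1:ℝ) < 2 * γ - 1))]
      have h2γ : 2 * γ - 1 + 1 = 2 * γ := by ring
      rw [h2γ, Real.one_rpow, Real.zero_rpow (by positivity : (2:ℝ) * γ ≠ 0)]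
      field_simp
      ring
    · intro u hu
      rcases eq_or_lt_of_le hu.1 with h0 | hupos
      · rw [← h0]
        simp only [Real.zero_rpow hγ0.ne', mul_zero, neg_zero, Real.exp_zero, sub_self, zero_mul]
        have : (0:ℝ) ≤ (0:ℝ) ^ (2 * γ - 1) := Real.rpow_nonneg le_rfl _
        nlinarith
      · have hkey := exp_neg_sub_exp_neg (a := x * u ^ γ) (b := y * u ^ γ)
          (mul_nonneg hx (Real.rpow_nonneg hupos.le _))
          (mul_le_mul_of_nonneg_right hxy (Real.rpow_nonneg hupos.le _))
        have h2 : (0:ℝ) ≤ u ^ (γ - 1) := Real.rpow_nonneg hupos.le _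
        have hmul : u ^ γ * u ^ (γ - 1) = u ^ (2 * γ - 1) := by
          rw [← Real.rpow_add hupos]; ring_nf
        calc (Real.exp (-(x * u ^ γ)) - Real.exp (-(y * u ^ γ))) * u ^ (γ - 1)
            ≤ (y * u ^ γ - x * u ^ γ) * u ^ (γ - 1) :=
              mul_le_mul_of_nonneg_right (by linarith) h2
          _ = (y - x) * (u ^ γ * u ^ (γ - 1)) := by ring
          _ = (y - x) * u ^ (2 * γ - 1) := by rw [hmul]

lemma Gfun_zero {γ : ℝ} : Gfun γ 0 = 0 := by
  simp [Gfun]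

lemma Gfun_bounds {γ x : ℝ} (hγ0 : 0 < γ) (hx : 0 ≤ x) :
    0 ≤ Gfun γ x ∧ Gfun γ x ≤ x / (2 * γ) := by
  have := Gfun_diff (x := 0) (y := x) hγ0 le_rfl hx
  rw [Gfun_zero] at this
  simpa using this

lemma Mfun_eq_Gfun {γ μ : ℝ} (hγ0 : 0 < γ) (hγ1 : γ < 1) (θ : ℝ) (hθ : 0 ≤ θ) :
    Mfun γ μ θ = Gfun γ (μ * θ ^ γ) := by
  rcases eq_or_lt_of_le hθ with h0 | hθ
  · rw [← h0]
    simp [Mfun, Gfun, Real.zero_rpow hγ0.ne']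
  · have key : (∫ ξ in (0:ℝ)..θ, (1 - Real.exp (-(μ * ξ ^ γ))) / ξ ^ (1 - γ))
        = θ * ∫ u in (0:ℝ)..1, (1 - Real.exp (-(μ * (θ * u) ^ γ))) / (θ * u) ^ (1 - γ) := by
      have := intervalIntegral.smul_integral_comp_mul_left (a := (0:ℝ)) (b := 1)
        (f := fun ξ : ℝ => (1 - Real.exp (-(μ * ξ ^ γ))) / ξ ^ (1 - γ)) θ
      simp only [mul_zero, mul_one, smul_eq_mul] at this
      exact this.symm
    have congr1 : (∫ u in (0:ℝ)..1, (1 - Real.exp (-(μ * (θ * u) ^ γ))) / (θ * u) ^ (1 - γ))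
        = θ ^ (γ - 1) * ∫ u in (0:ℝ)..1,
            (1 - Real.exp (-(μ * θ ^ γ * u ^ γ))) * u ^ (γ - 1) := by
      rw [← intervalIntegral.integral_const_mul]
      apply intervalIntegral.integral_congr
      intro u hu
      rw [uIcc_of_le zero_le_one] at hu
      rcases eq_or_lt_of_le hu.1 with h0 | hupos
      · rw [← h0]
        simp [Real.zero_rpow hγ0.ne', Real.zero_rpow (by linarith : (1:ℝ) - γ ≠ 0)]
      · have hθu : 0 < θ * u := mul_pos hθ hupos
        simp only
        rw [Real.mul_rpow hθ.le hupos.le, Real.mul_rpow hθ.le hupos.le]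
        have e1 : θ ^ (γ - 1) = (θ ^ (1 - γ))⁻¹ := by
          rw [show γ - 1 = -(1 - γ) by ring, Real.rpow_neg hθ.le]
        have e2 : u ^ (γ - 1) = (u ^ (1 - γ))⁻¹ := by
          rw [show γ - 1 = -(1 - γ) by ring, Real.rpow_neg hupos.le]
        have h1 : θ ^ (1 - γ) ≠ 0 := ne_of_gt (Real.rpow_pos_of_pos hθ _)
        have h2 : u ^ (1 - γ) ≠ 0 := ne_of_gt (Real.rpow_pos_of_pos hupos _)
        rw [e1, e2, mul_assoc]
        field_simp
    have hpowθ : θ ^ (-γ) * (θ * θ ^ (γ - 1)) = 1 := by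
      have h1 : θ * θ ^ (γ - 1) = θ ^ γ := by
        nth_rewrite 1 [← Real.rpow_one θ]
        rw [← Real.rpow_add hθ]; ring_nf
      rw [h1, ← Real.rpow_add hθ]
      simp
    rw [Mfun, key, congr1, Gfun]
    calc θ ^ (-γ) * (θ * (θ ^ (γ - 1) * ∫ u in (0:ℝ)..1,
          (1 - Real.exp (-(μ * θ ^ γ * u ^ γ))) * u ^ (γ - 1)))
        = (θ ^ (-γ) * (θ * θ ^ (γ - 1))) * ∫ u in (0:ℝ)..1,
          (1 - Real.exp (-(μ * θ ^ γ * u ^ γ))) * u ^ (γ - 1) := by ring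
      _ = _ := by rw [hpowθ, one_mul]

lemma Mfun_continuousOn {γ μ : ℝ} (hγ0 : 0 < γ) (hγ1 : γ < 1) (hμ : 0 ≤ μ) :
    ContinuousOn (Mfun γ μ) (Ici 0) := by
  have crp : Continuous (fun θ : ℝ => θ ^ γ) := by
    rw [continuous_iff_continuousAt]
    intro z
    exact Real.continuousAt_rpow_const z γ (Or.inr hγ0.le)
  have hinner : Continuous (fun θ : ℝ => μ * θ ^ γ) := continuous_const.mul crp
  have houter : ContinuousOn (Gfun γ) (Ici 0) := by
    apply LipschitzOnWith.continuousOn (K := Real.toNNReal (1 / (2 * γ)))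
    rw [lipschitzOnWith_iff_dist_le_mul]
    intro x hx y hy
    rw [Real.dist_eq, Real.dist_eq]
    have hK : (Real.toNNReal (1 / (2 * γ)) : ℝ) = 1 / (2 * γ) :=
      Real.coe_toNNReal _ (by positivity)
    rw [hK]
    rcases le_total y x with h | h
    · obtain ⟨hd0, hd1⟩ := Gfun_diff hγ0 hy h
      rw [abs_of_nonneg hd0, abs_of_nonneg (by linarith : (0:ℝ) ≤ x - y)]
      calc Gfun γ x - Gfun γ y ≤ (x - y) / (2 * γ) := hd1
        _ = 1 / (2 * γ) * (x - y) := by ring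
    · obtain ⟨hd0, hd1⟩ := Gfun_diff hγ0 hx h
      rw [abs_of_nonpos (by linarith), abs_of_nonpos (by linarith : x - y ≤ 0)]
      calc -(Gfun γ x - Gfun γ y) = Gfun γ y - Gfun γ x := by ring
        _ ≤ (y - x) / (2 * γ) := hd1
        _ = 1 / (2 * γ) * -(x - y) := by ring
  have hcomp : ContinuousOn (fun θ : ℝ => Gfun γ (μ * θ ^ γ)) (Ici 0) :=
    houter.comp hinner.continuousOn
      (fun θ hθ => mul_nonneg hμ (Real.rpow_nonneg hθ _))
  exact hcomp.congr (fun θ hθ => Mfun_eq_Gfun hγ0 hγ1 θ hθ)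

lemma key_est {γ μ T : ℝ} (hγ0 : 0 < γ) (hγ1 : γ < 1) (hμ : 0 < μ) (hT : 0 < T)
    {r : ℝ → ℝ} (hr : ContinuousOn r (Icc 0 T)) {R : ℝ}
    (hR0 : 0 ≤ R) (hRb : ∀ τ ∈ Icc (0:ℝ) T, |r τ| ≤ R)
    {s s' : ℝ} (hs : 0 ≤ s) (hss' : s ≤ s') (hs'T : s' ≤ T) :
    |(∫ τ in (0:ℝ)..s', Mfun γ μ (s' - τ) * r τ) - ∫ τ in (0:ℝ)..s, Mfun γ μ (s - τ) * r τ|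
      ≤ ((γ + 2) * μ * R * T ^ γ / (2 * (γ + 1) * γ)) * (s' - s) := by
  have hsT : s ≤ T := hss'.trans hs'T
  have hs' : 0 ≤ s' := hs.trans hss'
  have hγ1p : (0:ℝ) < γ + 1 := by linarith
  have crp : Continuous (fun θ : ℝ => θ ^ γ) := by
    rw [continuous_iff_continuousAt]
    intro z
    exact Real.continuousAt_rpow_const z γ (Or.inr hγ0.le)
  have hMc := Mfun_continuousOn (μ := μ) hγ0 hγ1 hμ.le
  have hMcomp : ∀ c : ℝ, 0 ≤ c → ContinuousOn (fun τ => Mfun γ μ (c - τ)) (Icc 0 c) := by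
    intro c hc
    exact hMc.comp (continuous_const.sub continuous_id).continuousOn
      (fun τ hτ => by simpa using by linarith [hτ.2] : _)
  have hrs : ContinuousOn r (Icc 0 s) := hr.mono (Icc_subset_Icc le_rfl hsT)
  have hrs' : ContinuousOn r (Icc 0 s') := hr.mono (Icc_subset_Icc le_rfl hs'T)
  have hcF : ContinuousOn (fun τ => Mfun γ μ (s - τ) * r τ) (Icc 0 s) :=
    (hMcomp s hs).mul hrs
  have hcF' : ContinuousOn (fun τ => Mfun γ μ (s' - τ) * r τ) (Icc 0 s') :=
    (hMcomp s' hs').mul hrs'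
  have hF : IntervalIntegrable (fun τ => Mfun γ μ (s - τ) * r τ) volume 0 s :=
    hcF.intervalIntegrable_of_Icc hs
  have hF'full : IntervalIntegrable (fun τ => Mfun γ μ (s' - τ) * r τ) volume 0 s' :=
    hcF'.intervalIntegrable_of_Icc hs'
  have hF'1 : IntervalIntegrable (fun τ => Mfun γ μ (s' - τ) * r τ) volume 0 s :=
    hF'full.mono_set (by rw [uIcc_of_le hs, uIcc_of_le hs']; exact Icc_subset_Icc le_rfl hss')
  have hF'2 : IntervalIntegrable (fun τ => Mfun γ μ (s' - τ) * r τ) volume s s' :=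
    hF'full.mono_set (by rw [uIcc_of_le hss', uIcc_of_le hs']; exact Icc_subset_Icc hs le_rfl)
  have hsplit : (∫ τ in (0:ℝ)..s', Mfun γ μ (s' - τ) * r τ)
      = (∫ τ in (0:ℝ)..s, Mfun γ μ (s' - τ) * r τ)
        + ∫ τ in s..s', Mfun γ μ (s' - τ) * r τ :=
    (intervalIntegral.integral_add_adjacent_intervals hF'1 hF'2).symm
  -- pointwise bound for the difference of kernels
  have hMd : ∀ τ ∈ Icc (0:ℝ) s,
      |Mfun γ μ (s' - τ) - Mfun γ μ (s - τ)|
        ≤ μ * ((s' - τ) ^ γ - (s - τ) ^ γ) / (2 * γ) := by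
    intro τ hτ
    have h1 : 0 ≤ s - τ := by linarith [hτ.2]
    have h2 : 0 ≤ s' - τ := by linarith [hτ.2]
    rw [Mfun_eq_Gfun hγ0 hγ1 _ h2, Mfun_eq_Gfun hγ0 hγ1 _ h1]
    have hxy : μ * (s - τ) ^ γ ≤ μ * (s' - τ) ^ γ :=
      mul_le_mul_of_nonneg_left (Real.rpow_le_rpow h1 (by linarith) hγ0.le) hμ.le
    have hx0 : 0 ≤ μ * (s - τ) ^ γ := mul_nonneg hμ.le (Real.rpow_nonneg h1 _)
    obtain ⟨hd0, hd1⟩ := Gfun_diff hγ0 hx0 hxy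
    rw [abs_of_nonneg hd0]
    calc Gfun γ (μ * (s' - τ) ^ γ) - Gfun γ (μ * (s - τ) ^ γ)
        ≤ (μ * (s' - τ) ^ γ - μ * (s - τ) ^ γ) / (2 * γ) := hd1
      _ = μ * ((s' - τ) ^ γ - (s - τ) ^ γ) / (2 * γ) := by ring
  -- Integral computations
  have hA : (∫ τ in (0:ℝ)..s, (s' - τ) ^ γ)
      = (s' ^ (γ + 1) - (s' - s) ^ (γ + 1)) / (γ + 1) := by
    rw [intervalIntegral.integral_comp_sub_left (fun x : ℝ => x ^ γ) s']
    rw [integral_rpow (Or.inl (by linarith : (-1:ℝ) < γ))]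
    rw [sub_zero]
  have hB : (∫ τ in (0:ℝ)..s, (s - τ) ^ γ) = s ^ (γ + 1) / (γ + 1) := by
    rw [intervalIntegral.integral_comp_sub_left (fun x : ℝ => x ^ γ) s]
    rw [integral_rpow (Or.inl (by linarith : (-1:ℝ) < γ))]
    rw [sub_self, sub_zero, Real.zero_rpow (by positivity : γ + 1 ≠ 0), sub_zero]
  have hC : (∫ τ in s..s', (s' - τ) ^ γ) = (s' - s) ^ (γ + 1) / (γ + 1) := by
    rw [intervalIntegral.integral_comp_sub_left (fun x : ℝ => x ^ γ) s']
    rw [sub_self, integral_rpow (Or.inl (by linarith : (-1:ℝ) < γ))]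
    rw [Real.zero_rpow (by positivity : γ + 1 ≠ 0), sub_zero]
  have hintA : IntervalIntegrable (fun τ : ℝ => (s' - τ) ^ γ) volume 0 s :=
    ((crp.comp (continuous_const.sub continuous_id)).intervalIntegrable 0 s)
  have hintB : IntervalIntegrable (fun τ : ℝ => (s - τ) ^ γ) volume 0 s :=
    ((crp.comp (continuous_const.sub continuous_id)).intervalIntegrable 0 s)
  have hintC : IntervalIntegrable (fun τ : ℝ => (s' - τ) ^ γ) volume s s' :=
    ((crp.comp (continuous_const.sub continuous_id)).intervalIntegrable s s')
  -- Bound 1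
  have hI1 : |∫ τ in (0:ℝ)..s, (Mfun γ μ (s' - τ) * r τ - Mfun γ μ (s - τ) * r τ)|
      ≤ R * μ / (2 * γ) * (T ^ γ * (s' - s)) := by
    have habs := intervalIntegral.abs_integral_le_integral_abs (a := 0) (b := s) (μ := volume)
      (f := fun τ => Mfun γ μ (s' - τ) * r τ - Mfun γ μ (s - τ) * r τ) hs
    have hcdiff : ContinuousOn
        (fun τ => |Mfun γ μ (s' - τ) * r τ - Mfun γ μ (s - τ) * r τ|) (Icc 0 s) :=
      ((((hMcomp s' hs').mono (Icc_subset_Icc le_rfl hss')).mul hrs).sub hcF).abs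
    have hint1 : IntervalIntegrable
        (fun τ => |Mfun γ μ (s' - τ) * r τ - Mfun γ μ (s - τ) * r τ|) volume 0 s :=
      hcdiff.intervalIntegrable_of_Icc hs
    have hint2 : IntervalIntegrable
        (fun τ : ℝ => R * μ / (2 * γ) * ((s' - τ) ^ γ - (s - τ) ^ γ)) volume 0 s :=
      ((hintA.sub hintB).const_mul _)
    have hmono := intervalIntegral.integral_mono_on hs hint1 hint2 ?_
    · have hcomp : (∫ τ in (0:ℝ)..s, R * μ / (2 * γ) * ((s' - τ) ^ γ - (s - τ) ^ γ))
          = R * μ / (2 * γ) * ((s' ^ (γ + 1) - (s' - s) ^ (γ + 1) - s ^ (γ + 1)) / (γ + 1)) := by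
        rw [intervalIntegral.integral_const_mul, intervalIntegral.integral_sub hintA hintB,
          hA, hB]
        ring
      have hmean : s' ^ (γ + 1) - s ^ (γ + 1) ≤ (γ + 1) * (T ^ γ * (s' - s)) := by
        have h1 : (∫ x in s..s', x ^ γ) = (s' ^ (γ + 1) - s ^ (γ + 1)) / (γ + 1) :=
          integral_rpow (Or.inl (by linarith : (-1:ℝ) < γ))
        have h2 : (∫ x in s..s', x ^ γ) ≤ ∫ x in s..s', T ^ γ := by
          apply intervalIntegral.integral_mono_on hss'
            (crp.intervalIntegrable s s') (intervalIntegrable_const)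
          intro x hx
          exact Real.rpow_le_rpow (hs.trans hx.1) (hx.2.trans hs'T) hγ0.le
        rw [h1, intervalIntegral.integral_const, smul_eq_mul] at h2
        have := (div_le_iff₀ hγ1p).mp h2
        nlinarith
      have hpos : (0:ℝ) ≤ (s' - s) ^ (γ + 1) := Real.rpow_nonneg (by linarith) _
      have hcoef : (0:ℝ) ≤ R * μ / (2 * γ) := by positivity
      calc |∫ τ in (0:ℝ)..s, (Mfun γ μ (s' - τ) * r τ - Mfun γ μ (s - τ) * r τ)|
          ≤ ∫ τ in (0:ℝ)..s, |Mfun γ μ (s' - τ) * r τ - Mfun γ μ (s - τ) * r τ| := habs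
        _ ≤ ∫ τ in (0:ℝ)..s, R * μ / (2 * γ) * ((s' - τ) ^ γ - (s - τ) ^ γ) := hmono
        _ = R * μ / (2 * γ) * ((s' ^ (γ + 1) - (s' - s) ^ (γ + 1) - s ^ (γ + 1)) / (γ + 1)) :=
            hcomp
        _ ≤ R * μ / (2 * γ) * (T ^ γ * (s' - s)) := by
            apply mul_le_mul_of_nonneg_left _ hcoef
            rw [div_le_iff₀ hγ1p]
            nlinarith
    · intro τ hτ
      have hrb : |r τ| ≤ R := hRb τ ⟨hτ.1, hτ.2.trans hsT⟩
      have habs0 : 0 ≤ |r τ| := abs_nonneg _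
      have hMdb := hMd τ hτ
      have hMdpos : 0 ≤ |Mfun γ μ (s' - τ) - Mfun γ μ (s - τ)| := abs_nonneg _
      calc |Mfun γ μ (s' - τ) * r τ - Mfun γ μ (s - τ) * r τ|
          = |Mfun γ μ (s' - τ) - Mfun γ μ (s - τ)| * |r τ| := by
            rw [← abs_mul]; congr 1; ring
        _ ≤ (μ * ((s' - τ) ^ γ - (s - τ) ^ γ) / (2 * γ)) * R := by
            apply mul_le_mul hMdb hrb habs0
            exact le_trans hMdpos hMdb
        _ = R * μ / (2 * γ) * ((s' - τ) ^ γ - (s - τ) ^ γ) := by ring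
  -- Bound 2
  have hI2 : |∫ τ in s..s', Mfun γ μ (s' - τ) * r τ|
      ≤ R * μ / (2 * γ) * (T ^ γ * (s' - s) / (γ + 1)) := by
    have habs := intervalIntegral.abs_integral_le_integral_abs (a := s) (b := s') (μ := volume)
      (f := fun τ => Mfun γ μ (s' - τ) * r τ) hss'
    have hint1 : IntervalIntegrable
        (fun τ => |Mfun γ μ (s' - τ) * r τ|) volume s s' := hF'2.abs
    have hint2 : IntervalIntegrable
        (fun τ : ℝ => R * μ / (2 * γ) * (s' - τ) ^ γ) volume s s' := hintC.const_mul _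
    have hmono := intervalIntegral.integral_mono_on hss' hint1 hint2 ?_
    · have hcomp : (∫ τ in s..s', R * μ / (2 * γ) * (s' - τ) ^ γ)
          = R * μ / (2 * γ) * ((s' - s) ^ (γ + 1) / (γ + 1)) := by
        rw [intervalIntegral.integral_const_mul, hC]
      have hh : (s' - s) ^ (γ + 1) ≤ T ^ γ * (s' - s) := by
        rcases eq_or_lt_of_le hss' with h0 | hlt
        · rw [← h0, sub_self, Real.zero_rpow (by positivity : γ + 1 ≠ 0), mul_zero]
        · have hpos : 0 < s' - s := by linarith
          have : (s' - s) ^ (γ + 1) = (s' - s) ^ γ * (s' - s) := by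
            rw [Real.rpow_add hpos, Real.rpow_one]
          rw [this]
          apply mul_le_mul_of_nonneg_right _ hpos.le
          exact Real.rpow_le_rpow hpos.le (by linarith) hγ0.le
      have hcoef : (0:ℝ) ≤ R * μ / (2 * γ) := by positivity
      calc |∫ τ in s..s', Mfun γ μ (s' - τ) * r τ|
          ≤ ∫ τ in s..s', |Mfun γ μ (s' - τ) * r τ| := habs
        _ ≤ ∫ τ in s..s', R * μ / (2 * γ) * (s' - τ) ^ γ := hmono
        _ = R * μ / (2 * γ) * ((s' - s) ^ (γ + 1) / (γ + 1)) := hcomp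
        _ ≤ R * μ / (2 * γ) * (T ^ γ * (s' - s) / (γ + 1)) := by
            apply mul_le_mul_of_nonneg_left _ hcoef
            exact (div_le_div_iff_of_pos_right hγ1p).mpr hh
    · intro τ hτ
      have h2 : 0 ≤ s' - τ := by linarith [hτ.2]
      have hrb : |r τ| ≤ R := hRb τ ⟨hs.trans hτ.1, hτ.2.trans hs'T⟩
      have hx0 : 0 ≤ μ * (s' - τ) ^ γ := mul_nonneg hμ.le (Real.rpow_nonneg h2 _)
      obtain ⟨hg0, hg1⟩ := Gfun_bounds hγ0 hx0
      rw [abs_mul, Mfun_eq_Gfun hγ0 hγ1 _ h2, abs_of_nonneg hg0]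
      calc Gfun γ (μ * (s' - τ) ^ γ) * |r τ|
          ≤ (μ * (s' - τ) ^ γ / (2 * γ)) * R :=
            mul_le_mul hg1 hrb (abs_nonneg _) (by positivity)
        _ = R * μ / (2 * γ) * (s' - τ) ^ γ := by ring
  -- Combine
  have hdec : (∫ τ in (0:ℝ)..s', Mfun γ μ (s' - τ) * r τ)
      - (∫ τ in (0:ℝ)..s, Mfun γ μ (s - τ) * r τ)
      = (∫ τ in (0:ℝ)..s, (Mfun γ μ (s' - τ) * r τ - Mfun γ μ (s - τ) * r τ))
        + ∫ τ in s..s', Mfun γ μ (s' - τ) * r τ := by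
    rw [hsplit, intervalIntegral.integral_sub hF'1 hF]
    ring
  rw [hdec]
  have htri := abs_add_le (∫ τ in (0:ℝ)..s, (Mfun γ μ (s' - τ) * r τ - Mfun γ μ (s - τ) * r τ))
    (∫ τ in s..s', Mfun γ μ (s' - τ) * r τ)
  have hfinal : R * μ / (2 * γ) * (T ^ γ * (s' - s))
      + R * μ / (2 * γ) * (T ^ γ * (s' - s) / (γ + 1))
      = (γ + 2) * μ * R * T ^ γ / (2 * (γ + 1) * γ) * (s' - s) := by
    field_simp
    ring
  linarith [hI1, hI2]

theorem stmt11 (γ μ T : ℝ) (hγ0 : 0 < γ) (hγ1 : γ < 1) (hμ : 0 < μ) (hT : 0 < T)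
    (r : ℝ → ℝ) (hr : ContinuousOn r (Icc 0 T))
    (R : ℝ) (hR : IsGreatest {y | ∃ ξ ∈ Icc (0:ℝ) T, y = |r ξ|} R)
    (v₃ : ℝ → ℝ) (hv₃ : ∀ s, v₃ s = ∫ τ in (0:ℝ)..s, Mfun γ μ (s - τ) * r τ) :
    ∀ s ∈ Icc (0:ℝ) T, ∀ s' ∈ Icc (0:ℝ) T,
      |v₃ s' - v₃ s| ≤ ((γ + 2) * μ * R * T ^ γ / (2 * (γ + 1) * γ)) * |s' - s| := by
  obtain ⟨⟨ξ₀, hξ₀, hRval⟩, hub⟩ := hR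
  have hR0 : 0 ≤ R := hRval ▸ abs_nonneg _
  have hRb : ∀ τ ∈ Icc (0:ℝ) T, |r τ| ≤ R := fun τ hτ => hub ⟨τ, hτ, rfl⟩
  intro s hs s' hs'
  rw [hv₃ s, hv₃ s']
  rcases le_total s s' with h | h
  · rw [abs_of_nonneg (by linarith : (0:ℝ) ≤ s' - s)]
    exact key_est hγ0 hγ1 hμ hT hr hR0 hRb hs.1 h hs'.2
  · rw [abs_sub_comm, abs_of_nonpos (by linarith : s' - s ≤ 0)]
    have := key_est hγ0 hγ1 hμ hT hr hR0 hRb hs'.1 h hs.2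
    linarith [this]
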